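/- Let ψ : ℝ^{2×2} → ℝ be rank-one convex with ψ(G) ≤ dist²(G, K) for all G ∈ ℝ^{2×2}. Then for every F ∈ ℝ^{2×2}, ψ(F) ≤ h(|Fv|, |Fw|, det F), where v = (1,1)/√2 and w = (1,−1)/√2. -/

import Mathlib

open Matrix

noncomputable section

def frobSq (F : Matrix (Fin 2) (Fin 2) ℝ) : ℝ := ∑ i, ∑ j, (F i j) ^ 2

def SO2 : Set (Matrix (Fin 2) (Fin 2) ℝ) := {Q | Qᵀ * Q = 1 ∧ Q.det = 1}

def U1 (l : ℝ) : Matrix (Fin 2) (Fin 2) ℝ := !![l, 0; 0, 1 / l]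

def U2 (l : ℝ) : Matrix (Fin 2) (Fin 2) ℝ := !![1 / l, 0; 0, l]

def Kset (l : ℝ) : Set (Matrix (Fin 2) (Fin 2) ℝ) :=
  {G | ∃ Q ∈ SO2, G = Q * U1 l ∨ G = Q * U2 l}

/-- Squared Frobenius distance from `F` to the set `K`. -/
def distSqK (l : ℝ) (F : Matrix (Fin 2) (Fin 2) ℝ) : ℝ :=
  sInf {r | ∃ G ∈ Kset l, r = frobSq (F - G)}

def vvec : Fin 2 → ℝ := ![1 / Real.sqrt 2, 1 / Real.sqrt 2]

def wvec : Fin 2 → ℝ := ![1 / Real.sqrt 2, -(1 / Real.sqrt 2)]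

def xF (F : Matrix (Fin 2) (Fin 2) ℝ) : ℝ := Real.sqrt (∑ i, (F.mulVec vvec i) ^ 2)

def yF (F : Matrix (Fin 2) (Fin 2) ℝ) : ℝ := Real.sqrt (∑ i, (F.mulVec wvec i) ^ 2)

def Afun (l x y d : ℝ) : ℝ :=
  (x ^ 2 + y ^ 2) * (l ^ 2 + 1 / l ^ 2) / 2
    + (l ^ 2 - 1 / l ^ 2) * Real.sqrt (x ^ 2 * y ^ 2 - d ^ 2) + 2 * d

def gfun (l x y d : ℝ) : ℝ :=
  x ^ 2 + y ^ 2 + (l ^ 2 + 1 / l ^ 2) - 2 * Real.sqrt (Afun l x y d)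

/-- A function `ψ` on 2×2 matrices is rank-one convex if it is convex along every
rank-one line `t ↦ F + t a⊗b`. -/
def RankOneConvex (ψ : Matrix (Fin 2) (Fin 2) ℝ → ℝ) : Prop :=
  ∀ (F : Matrix (Fin 2) (Fin 2) ℝ) (a b : Fin 2 → ℝ),
    ConvexOn ℝ Set.univ fun t : ℝ => ψ (F + t • vecMulVec a b)

def hfun (l x y d : ℝ) : ℝ :=
  sInf {r | ∃ ξ η : ℝ, x ≤ ξ ∧ y ≤ η ∧ r = gfun l ξ η d}


lemma frobSq_nonneg (F : Matrix (Fin 2) (Fin 2) ℝ) : 0 ≤ frobSq F := by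
  unfold frobSq; positivity

lemma sqrt2_sq : Real.sqrt 2 * Real.sqrt 2 = 2 := Real.mul_self_sqrt (by norm_num)

lemma vv_dot : vvec ⬝ᵥ vvec = 1 := by
  simp [vvec, dotProduct, Fin.sum_univ_two]
  have h2 : Real.sqrt 2 ≠ 0 := by positivity
  field_simp
  rw [Real.sq_sqrt (by norm_num : (0:ℝ) ≤ 2)]; norm_num

lemma ww_dot : wvec ⬝ᵥ wvec = 1 := by
  simp [wvec, dotProduct, Fin.sum_univ_two]
  have h2 : Real.sqrt 2 ≠ 0 := by positivity
  field_simp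
  rw [Real.sq_sqrt (by norm_num : (0:ℝ) ≤ 2)]; norm_num

lemma vw_dot : vvec ⬝ᵥ wvec = 0 := by
  simp [vvec, wvec, dotProduct, Fin.sum_univ_two]

lemma wv_dot : wvec ⬝ᵥ vvec = 0 := by
  simp [vvec, wvec, dotProduct, Fin.sum_univ_two]

lemma mulVec_v (F : Matrix (Fin 2) (Fin 2) ℝ) :
    F.mulVec vvec 0 = (F 0 0 + F 0 1) / Real.sqrt 2 ∧
    F.mulVec vvec 1 = (F 1 0 + F 1 1) / Real.sqrt 2 := by
  constructor <;> simp [Matrix.mulVec, vvec, dotProduct, Fin.sum_univ_two] <;> ring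

lemma mulVec_w (F : Matrix (Fin 2) (Fin 2) ℝ) :
    F.mulVec wvec 0 = (F 0 0 - F 0 1) / Real.sqrt 2 ∧
    F.mulVec wvec 1 = (F 1 0 - F 1 1) / Real.sqrt 2 := by
  constructor <;> simp [Matrix.mulVec, wvec, dotProduct, Fin.sum_univ_two] <;> ring

def cvec (F : Matrix (Fin 2) (Fin 2) ℝ) (b : Fin 2 → ℝ) : Fin 2 → ℝ :=
  ![b 0 * F 1 1 - b 1 * F 1 0, b 1 * F 0 0 - b 0 * F 0 1]

lemma det_rankone (F : Matrix (Fin 2) (Fin 2) ℝ) (a b : Fin 2 → ℝ) (t : ℝ) :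
    (F + t • vecMulVec a b).det = F.det + t * (a ⬝ᵥ cvec F b) := by
  simp [Matrix.det_fin_two, cvec, dotProduct, Fin.sum_univ_two, Matrix.vecMulVec_apply]
  ring

lemma mulVec_rankone (F : Matrix (Fin 2) (Fin 2) ℝ) (a b u : Fin 2 → ℝ) (t : ℝ) :
    (F + t • vecMulVec a b).mulVec u = fun i => F.mulVec u i + t * (b ⬝ᵥ u) * a i := by
  funext i
  simp [Matrix.mulVec, dotProduct, Fin.sum_univ_two, Matrix.vecMulVec_apply]
  ring

lemma exists_unit_perp (c : Fin 2 → ℝ) : ∃ a : Fin 2 → ℝ, a ⬝ᵥ a = 1 ∧ a ⬝ᵥ c = 0 := by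
  by_cases hc : c = 0
  · exact ⟨![1, 0], by simp [dotProduct, Fin.sum_univ_two], by simp [hc]⟩
  · have hpos : 0 < c 0 ^ 2 + c 1 ^ 2 := by
      have h01 : c 0 ≠ 0 ∨ c 1 ≠ 0 := by
        by_contra h
        push_neg at h
        exact hc (funext fun i => by fin_cases i <;> simp [h.1, h.2])
      rcases h01 with h | h
      · positivity
      · positivity
    set s := Real.sqrt (c 0 ^ 2 + c 1 ^ 2) with hs
    have hs0 : 0 < s := Real.sqrt_pos.mpr hpos
    have hssq : s ^ 2 = c 0 ^ 2 + c 1 ^ 2 := Real.sq_sqrt hpos.le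
    refine ⟨![-(c 1) / s, c 0 / s], ?_, ?_⟩
    · simp only [dotProduct, Fin.sum_univ_two, Matrix.cons_val_zero, Matrix.cons_val_one,
        Matrix.head_cons]
      field_simp
      linarith [hssq]
    · simp only [dotProduct, Fin.sum_univ_two, Matrix.cons_val_zero, Matrix.cons_val_one,
        Matrix.head_cons]
      field_simp
      ring

lemma psi_split (ψ : Matrix (Fin 2) (Fin 2) ℝ → ℝ) (hψ : RankOneConvex ψ)
    (F : Matrix (Fin 2) (Fin 2) ℝ) (a b : Fin 2 → ℝ) {tp tm : ℝ}
    (hm : tm ≤ 0) (hp : 0 ≤ tp) :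
    ψ F ≤ max (ψ (F + tp • vecMulVec a b)) (ψ (F + tm • vecMulVec a b)) := by
  have hc := hψ F a b
  by_cases h : tp - tm = 0
  · have h1 : tp = 0 := le_antisymm (by linarith) hp
    have h2 : tm = 0 := by linarith
    subst h1; subst h2
    simp
  · have hd : 0 < tp - tm := lt_of_le_of_ne (by linarith) (Ne.symm h)
    set μ := (-tm) / (tp - tm) with hμ
    have hμ0 : 0 ≤ μ := div_nonneg (by linarith) hd.le
    have hμ1 : 0 ≤ 1 - μ := by
      have : μ ≤ 1 := by
        rw [hμ, div_le_one hd]; linarith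
      linarith
    have hsum : μ * tp + (1 - μ) * tm = 0 := by
      field_simp [hμ]
      have h' : μ * (tp - tm) = -tm := by rw [hμ]; exact div_mul_cancel₀ _ h
      linear_combination h'
    have hkey := hc.2 (Set.mem_univ tp) (Set.mem_univ tm) hμ0 hμ1 (by ring)
    simp only [smul_eq_mul] at hkey
    rw [hsum] at hkey
    simp only [zero_smul, add_zero] at hkey
    have h1 := le_max_left (ψ (F + tp • vecMulVec a b)) (ψ (F + tm • vecMulVec a b))
    have h2 := le_max_right (ψ (F + tp • vecMulVec a b)) (ψ (F + tm • vecMulVec a b))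
    nlinarith [hkey, h1, h2, hμ0, hμ1]

lemma step (ψ : Matrix (Fin 2) (Fin 2) ℝ → ℝ) (hψ : RankOneConvex ψ)
    (F : Matrix (Fin 2) (Fin 2) ℝ) (b : Fin 2 → ℝ) (hb : b ⬝ᵥ b = 1) (ξ : ℝ)
    (hx : Real.sqrt (∑ i, (F.mulVec b i) ^ 2) ≤ ξ) :
    ∃ G₁ G₂ : Matrix (Fin 2) (Fin 2) ℝ,
      (∑ i, (G₁.mulVec b i) ^ 2 = ξ ^ 2) ∧ (∑ i, (G₂.mulVec b i) ^ 2 = ξ ^ 2) ∧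
      (∀ u, b ⬝ᵥ u = 0 → G₁.mulVec u = F.mulVec u) ∧
      (∀ u, b ⬝ᵥ u = 0 → G₂.mulVec u = F.mulVec u) ∧
      G₁.det = F.det ∧ G₂.det = F.det ∧ ψ F ≤ max (ψ G₁) (ψ G₂) := by
  obtain ⟨a, ha1, ha2⟩ := exists_unit_perp (cvec F b)
  set X := ∑ i, (F.mulVec b i) ^ 2 with hXdef
  have hX0 : 0 ≤ X := by positivity
  have hξ0 : 0 ≤ ξ := le_trans (Real.sqrt_nonneg _) hx
  have hXξ : X ≤ ξ ^ 2 := by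
    have := Real.sqrt_le_sqrt (le_of_eq (Real.sq_sqrt hX0).symm)
    nlinarith [Real.sq_sqrt hX0, Real.sqrt_nonneg X, hx, hξ0]
  set p := F.mulVec b ⬝ᵥ a with hpdef
  set r := Real.sqrt (p ^ 2 + (ξ ^ 2 - X)) with hrdef
  have hr2 : r ^ 2 = p ^ 2 + (ξ ^ 2 - X) := Real.sq_sqrt (by nlinarith)
  have hrabs : |p| ≤ r := by
    rw [hrdef, ← Real.sqrt_sq_eq_abs]
    exact Real.sqrt_le_sqrt (by nlinarith)
  have htp : 0 ≤ -p + r := by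
    have := neg_abs_le p; linarith [le_abs_self p]
  have htm : -p - r ≤ 0 := by
    linarith [neg_abs_le p, hrabs]
  have hnorm : ∀ t : ℝ, (∑ i, ((F + t • vecMulVec a b).mulVec b i) ^ 2)
      = X + 2 * t * p + t ^ 2 := by
    intro t
    rw [mulVec_rankone]
    simp only [hXdef, hpdef, dotProduct, Fin.sum_univ_two, hb]
    have hb' : b ⬝ᵥ b = 1 := hb
    simp only [dotProduct, Fin.sum_univ_two] at hb' ha1
    rw [hb']
    ring_nf
    nlinarith [ha1]
  have hdet : ∀ t : ℝ, (F + t • vecMulVec a b).det = F.det := by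
    intro t; rw [det_rankone, ha2]; ring
  have hmv : ∀ (t : ℝ) (u : Fin 2 → ℝ), b ⬝ᵥ u = 0 →
      (F + t • vecMulVec a b).mulVec u = F.mulVec u := by
    intro t u hu
    rw [mulVec_rankone]
    funext i
    rw [hu]
    ring
  refine ⟨F + (-p + r) • vecMulVec a b, F + (-p - r) • vecMulVec a b, ?_, ?_,
    hmv _, hmv _, hdet _, hdet _, psi_split ψ hψ F a b htm htp⟩
  · rw [hnorm]; linear_combination hr2
  · rw [hnorm]; linear_combination hr2

lemma bddBelow_distSet (l : ℝ) (F : Matrix (Fin 2) (Fin 2) ℝ) :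
    BddBelow {r | ∃ G ∈ Kset l, r = frobSq (F - G)} := by
  refine ⟨0, fun r hr => ?_⟩
  obtain ⟨G, _, rfl⟩ := hr
  exact frobSq_nonneg _

lemma exists_rot (T S : ℝ) : ∃ c s : ℝ, c ^ 2 + s ^ 2 = 1 ∧
    c * T + s * S = Real.sqrt (T ^ 2 + S ^ 2) := by
  set ρ := Real.sqrt (T ^ 2 + S ^ 2) with hρdef
  have hρ2 : ρ ^ 2 = T ^ 2 + S ^ 2 := Real.sq_sqrt (by positivity)
  by_cases hρz : ρ = 0
  · have hT : T = 0 := by nlinarith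
    have hS : S = 0 := by nlinarith
    exact ⟨1, 0, by norm_num, by rw [hT, hS, hρz]; ring⟩
  · refine ⟨T / ρ, S / ρ, ?_, ?_⟩
    · field_simp
      linarith [hρ2]
    · field_simp
      linarith [hρ2]

lemma distSq_le_core (l μ : ℝ) (hl : 1 < l) (hμ : μ = l ∨ μ = 1 / l)
    (F : Matrix (Fin 2) (Fin 2) ℝ) (A : ℝ)
    (hAle : A ≤ μ ^ 2 * (F 0 0 ^ 2 + F 1 0 ^ 2) + (1 / μ ^ 2) * (F 0 1 ^ 2 + F 1 1 ^ 2)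
      + 2 * F.det) :
    distSqK l F ≤ frobSq F + (l ^ 2 + 1 / l ^ 2) - 2 * Real.sqrt A := by
  have hl0 : 0 < l := lt_trans one_pos hl
  have hμ0 : 0 < μ := by
    rcases hμ with rfl | rfl
    · exact hl0
    · positivity
  have hμne : μ ≠ 0 := hμ0.ne'
  obtain ⟨T, hTdef⟩ : ∃ T : ℝ, T = μ * F 0 0 + F 1 1 / μ := ⟨_, rfl⟩
  obtain ⟨S, hSdef⟩ : ∃ S : ℝ, S = μ * F 1 0 - F 0 1 / μ := ⟨_, rfl⟩
  have key : T ^ 2 + S ^ 2 = μ ^ 2 * (F 0 0 ^ 2 + F 1 0 ^ 2)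
      + (1 / μ ^ 2) * (F 0 1 ^ 2 + F 1 1 ^ 2) + 2 * F.det := by
    rw [Matrix.det_fin_two, hTdef, hSdef]
    field_simp
    ring
  obtain ⟨ρ, hρdef⟩ : ∃ ρ : ℝ, ρ = Real.sqrt (T ^ 2 + S ^ 2) := ⟨_, rfl⟩
  have hρ0 : 0 ≤ ρ := hρdef ▸ Real.sqrt_nonneg _
  obtain ⟨c, s, hcs, hQB⟩ : ∃ c s : ℝ, c ^ 2 + s ^ 2 = 1 ∧ c * T + s * S = ρ := by
    rw [hρdef]; exact exists_rot T S
  set Q : Matrix (Fin 2) (Fin 2) ℝ := !![c, -s; s, c] with hQdef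
  have hQSO : Q ∈ SO2 := by
    constructor
    · have ht : Qᵀ = !![c, s; -s, c] := by
        rw [hQdef]; exact (Matrix.transposeᵣ_eq _).symm
      rw [ht, hQdef, Matrix.mul_fin_two, Matrix.one_fin_two]
      have h1 : c * c + s * s = 1 := by linear_combination hcs
      have h2 : c * -s + s * c = 0 := by ring
      have h3 : -s * c + c * s = 0 := by ring
      have h4 : -s * -s + c * c = 1 := by linear_combination hcs
      rw [h1, h2, h3, h4]
    · rw [hQdef, Matrix.det_fin_two_of]; linear_combination hcs
  set U : Matrix (Fin 2) (Fin 2) ℝ := !![μ, 0; 0, 1 / μ] with hUdef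
  have hK : Q * U ∈ Kset l := by
    refine ⟨Q, hQSO, ?_⟩
    rcases hμ with rfl | rfl
    · exact Or.inl rfl
    · refine Or.inr ?_
      rw [hUdef]
      unfold U2
      rw [one_div_one_div]
  have hdk : distSqK l F ≤ frobSq (F - Q * U) :=
    csInf_le (bddBelow_distSet l F) ⟨Q * U, hK, rfl⟩
  have hQU : Q * U = !![c * μ + -s * 0, c * 0 + -s * (1 / μ); s * μ + c * 0, s * 0 + c * (1 / μ)] := by
    rw [hQdef, hUdef, Matrix.mul_fin_two]
  have hfrob : frobSq (F - Q * U) = frobSq F + (c ^ 2 + s ^ 2) * (μ ^ 2 + 1 / μ ^ 2)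
      - 2 * (c * T + s * S) := by
    rw [hQU]
    unfold frobSq
    simp only [Fin.sum_univ_two, Matrix.sub_apply, Matrix.cons_val', Matrix.cons_val_zero,
      Matrix.cons_val_one, Matrix.head_cons, Matrix.head_fin_const, Matrix.empty_val',
      Matrix.cons_val_fin_one, Matrix.of_apply, hTdef, hSdef]
    field_simp
    ring
  have hμl : μ ^ 2 + 1 / μ ^ 2 = l ^ 2 + 1 / l ^ 2 := by
    rcases hμ with rfl | rfl
    · rfl
    · field_simp
      ring
  have hsA : Real.sqrt A ≤ ρ := by
    rw [hρdef]
    exact Real.sqrt_le_sqrt (by linarith [key])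
  rw [hfrob, hcs, hQB, hμl] at hdk
  linarith

lemma distSq_le (l : ℝ) (hl : 1 < l) (F : Matrix (Fin 2) (Fin 2) ℝ) (ξ η : ℝ)
    (hx : ∑ i, (F.mulVec vvec i) ^ 2 = ξ ^ 2) (hy : ∑ i, (F.mulVec wvec i) ^ 2 = η ^ 2) :
    distSqK l F ≤ gfun l ξ η F.det := by
  have hl0 : 0 < l := lt_trans one_pos hl
  have hlne : l ≠ 0 := hl0.ne'
  have h2 : (Real.sqrt 2) ^ 2 = 2 := Real.sq_sqrt (by norm_num)
  have h2ne : Real.sqrt 2 ≠ 0 := by positivity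
  have hx' : (F 0 0 + F 0 1) ^ 2 / 2 + (F 1 0 + F 1 1) ^ 2 / 2 = ξ ^ 2 := by
    rw [Fin.sum_univ_two, (mulVec_v F).1, (mulVec_v F).2] at hx
    rw [div_pow, div_pow, h2] at hx
    exact hx
  have hy' : (F 0 0 - F 0 1) ^ 2 / 2 + (F 1 0 - F 1 1) ^ 2 / 2 = η ^ 2 := by
    rw [Fin.sum_univ_two, (mulVec_w F).1, (mulVec_w F).2] at hy
    rw [div_pow, div_pow, h2] at hy
    exact hy
  obtain ⟨p, hp⟩ : ∃ p : ℝ, p = (F 0 0 ^ 2 + F 1 0 ^ 2 - F 0 1 ^ 2 - F 1 1 ^ 2) / 2 := ⟨_, rfl⟩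
  have hfs : frobSq F = ξ ^ 2 + η ^ 2 := by
    unfold frobSq
    rw [Fin.sum_univ_two, Fin.sum_univ_two, Fin.sum_univ_two]
    linear_combination hx' + hy'
  have hpd : ξ ^ 2 * η ^ 2 - F.det ^ 2 = p ^ 2 := by
    rw [Matrix.det_fin_two, hp]
    linear_combination (-(η ^ 2)) * hx'
      - ((F 0 0 + F 0 1) ^ 2 / 2 + (F 1 0 + F 1 1) ^ 2 / 2) * hy'
  have hsq : Real.sqrt (ξ ^ 2 * η ^ 2 - F.det ^ 2) = |p| := by
    rw [hpd, Real.sqrt_sq_eq_abs]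
  by_cases hsgn : 0 ≤ p
  · have hAle : Afun l ξ η F.det ≤ l ^ 2 * (F 0 0 ^ 2 + F 1 0 ^ 2)
        + (1 / l ^ 2) * (F 0 1 ^ 2 + F 1 1 ^ 2) + 2 * F.det := by
      unfold Afun
      rw [hsq, abs_of_nonneg hsgn, hp]
      linear_combination (-(l ^ 2 + 1 / l ^ 2) / 2) * hx' + (-(l ^ 2 + 1 / l ^ 2) / 2) * hy'
    have := distSq_le_core l l hl (Or.inl rfl) F (Afun l ξ η F.det) hAle
    rw [hfs] at this
    exact this
  · push_neg at hsgn
    have hinv : 1 / (1 / l) ^ 2 = l ^ 2 := by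
      field_simp
    have hAle : Afun l ξ η F.det ≤ (1 / l) ^ 2 * (F 0 0 ^ 2 + F 1 0 ^ 2)
        + (1 / (1 / l) ^ 2) * (F 0 1 ^ 2 + F 1 1 ^ 2) + 2 * F.det := by
      unfold Afun
      rw [hsq, abs_of_neg hsgn, hp, hinv, div_pow, one_pow]
      linear_combination (-(l ^ 2 + 1 / l ^ 2) / 2) * hx' + (-(l ^ 2 + 1 / l ^ 2) / 2) * hy'
    have := distSq_le_core l (1 / l) hl (Or.inr rfl) F (Afun l ξ η F.det) hAle
    rw [hfs] at this
    exact this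

theorem rankOneConvex_le_h' (l : ℝ) (hl : 1 < l)
    (ψ : Matrix (Fin 2) (Fin 2) ℝ → ℝ) (hψ : RankOneConvex ψ)
    (hle : ∀ G, ψ G ≤ distSqK l G) (F : Matrix (Fin 2) (Fin 2) ℝ) :
    ψ F ≤ hfun l (xF F) (yF F) F.det := by
  apply le_csInf
  · exact ⟨gfun l (xF F) (yF F) F.det, xF F, yF F, le_refl _, le_refl _, rfl⟩
  rintro r ⟨ξ, η, hξ, hη, rfl⟩
  have final : ∀ (G H : Matrix (Fin 2) (Fin 2) ℝ),
      (∑ i, (G.mulVec vvec i) ^ 2 = ξ ^ 2) → G.det = F.det →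
      (∑ i, (H.mulVec wvec i) ^ 2 = η ^ 2) →
      (∀ u, wvec ⬝ᵥ u = 0 → H.mulVec u = G.mulVec u) → H.det = G.det →
      ψ H ≤ gfun l ξ η F.det := by
    intro G H h1 h2 h3 h4 h5
    have hxH : ∑ i, (H.mulVec vvec i) ^ 2 = ξ ^ 2 := by
      rw [h4 vvec wv_dot]; exact h1
    have hd := distSq_le l hl H ξ η hxH h3
    rw [h5, h2] at hd
    exact le_trans (hle H) hd
  obtain ⟨G₁, G₂, hG₁x, hG₂x, hG₁u, hG₂u, hG₁d, hG₂d, hψG⟩ :=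
    step ψ hψ F vvec vv_dot ξ hξ
  have hG₁y : Real.sqrt (∑ i, (G₁.mulVec wvec i) ^ 2) ≤ η := by
    rw [hG₁u wvec vw_dot]; exact hη
  have hG₂y : Real.sqrt (∑ i, (G₂.mulVec wvec i) ^ 2) ≤ η := by
    rw [hG₂u wvec vw_dot]; exact hη
  obtain ⟨H₁, H₂, h1y, h2y, h1u, h2u, h1d, h2d, hψ1⟩ :=
    step ψ hψ G₁ wvec ww_dot η hG₁y
  obtain ⟨H₃, H₄, h3y, h4y, h3u, h4u, h3d, h4d, hψ2⟩ :=
    step ψ hψ G₂ wvec ww_dot η hG₂y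
  have m1 : ψ G₁ ≤ gfun l ξ η F.det :=
    le_trans hψ1 (max_le (final G₁ H₁ hG₁x hG₁d h1y h1u h1d)
      (final G₁ H₂ hG₁x hG₁d h2y h2u h2d))
  have m2 : ψ G₂ ≤ gfun l ξ η F.det :=
    le_trans hψ2 (max_le (final G₂ H₃ hG₂x hG₂d h3y h3u h3d)
      (final G₂ H₄ hG₂x hG₂d h4y h4u h4d))
  exact le_trans hψG (max_le m1 m2)

/-- Any rank-one convex `ψ ≤ dist²(·,K)` satisfies `ψ(F) ≤ h(|Fv|, |Fw|, det F)`. -/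
theorem rankOneConvex_le_h (l : ℝ) (hl : 1 < l)
    (ψ : Matrix (Fin 2) (Fin 2) ℝ → ℝ) (hψ : RankOneConvex ψ)
    (hle : ∀ G, ψ G ≤ distSqK l G) (F : Matrix (Fin 2) (Fin 2) ℝ) :
    ψ F ≤ hfun l (xF F) (yF F) F.det := by
  exact rankOneConvex_le_h' l hl ψ hψ hle F
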